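/- Let M ⊆ 𝔽₂^m be a subspace and β > 0. Then the random-bond transpose partition function satisfies, exactly: Σ_{f ∈ 𝔽₂^m} Σ_{g ∈ M} exp(−β·(‖f‖ + ‖f+g‖)) = (1/|M^⊥|) · (1 + exp(−β))^{2m} · Σ_{h ∈ M^⊥} (tanh(β/2))^{2‖h‖}. (Eq. (Tdual): the disorder-averaged random-bond transpose model at inverse temperature β equals, up to the trivial factor, the perpendicular-complement model at inverse temperature 2β′ where exp(−β′) = tanh(β/2); so the study of the random-bond model reduces to the standard model.) -/

import Mathlib

open Finset

/-- Hamming weight of a binary vector. -/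
def wt {m : ℕ} (v : Fin m → ZMod 2) : ℕ :=
  (Finset.univ.filter (fun i => v i = 1)).card

noncomputable def sgn (a : ZMod 2) : ℝ := if a = 0 then 1 else -1

lemma sgn_zero : sgn 0 = 1 := rfl

lemma sgn_add (a b : ZMod 2) : sgn (a + b) = sgn a * sgn b := by
  rcases (by decide : ∀ x : ZMod 2, x = 0 ∨ x = 1) a with rfl | rfl <;>
    rcases (by decide : ∀ x : ZMod 2, x = 0 ∨ x = 1) b with rfl | rfl <;> simp [sgn, show (1+1 : ZMod 2) = 0 from rfl]

lemma sgn_sum {ι : Type*} (s : Finset ι) (a : ι → ZMod 2) :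
    sgn (∑ i ∈ s, a i) = ∏ i ∈ s, sgn (a i) := by
  induction s using Finset.cons_induction with
  | empty => simp [sgn]
  | cons i s hi ih => rw [Finset.sum_cons, Finset.prod_cons, sgn_add, ih]

lemma sum_zmod2 (F : ZMod 2 → ℝ) : ∑ x : ZMod 2, F x = F 0 + F 1 :=
  Fin.sum_univ_two F

lemma pi_sum {m : ℕ} (F : Fin m → ZMod 2 → ℝ) :
    ∑ f : Fin m → ZMod 2, ∏ i, F i (f i) = ∏ i, ∑ x : ZMod 2, F i x := by
  rw [Finset.prod_univ_sum]
  simp [Fintype.piFinset_univ]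

lemma tanh_half (β : ℝ) : Real.tanh (β/2) = (1 - Real.exp (-β)) / (1 + Real.exp (-β)) := by
  rw [Real.tanh_eq_sinh_div_cosh, Real.sinh_eq, Real.cosh_eq]
  set A := Real.exp (β/2) with hA
  set B := Real.exp (-(β/2)) with hB
  have hAB : A * B = 1 := by rw [hA, hB, ← Real.exp_add]; simp
  have hB2 : Real.exp (-β) = B * B := by rw [hB, ← Real.exp_add]; ring_nf
  have hApos : 0 < A := Real.exp_pos _
  have hBpos : 0 < B := Real.exp_pos _
  have hne1 : A + B ≠ 0 := by positivity
  have hne2 : 1 + B * B ≠ 0 := by positivity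
  rw [hB2]
  field_simp
  linear_combination (2*B) * hAB

lemma zmod2_ne_zero {x : ZMod 2} (h : x ≠ 0) : x = 1 := by revert h; revert x; decide

lemma wt_real {m : ℕ} (v : Fin m → ZMod 2) :
    (wt v : ℝ) = ∑ i, (if v i = 1 then (1:ℝ) else 0) := by
  rw [wt, Finset.card_filter]
  push_cast
  simp

open scoped Classical in
/-- Character orthogonality over the subgroup `M`. -/
lemma orth_sum {m : ℕ} (M : Submodule (ZMod 2) (Fin m → ZMod 2)) (h : Fin m → ZMod 2) :
    ∑ g ∈ Finset.univ.filter (fun g => g ∈ M), sgn (∑ i, g i * h i)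
      = if (∀ g ∈ M, ∑ i, g i * h i = 0)
        then ((Finset.univ.filter (fun g : Fin m → ZMod 2 => g ∈ M)).card : ℝ) else 0 := by
  by_cases hP : ∀ g ∈ M, ∑ i, g i * h i = 0
  · rw [if_pos hP]
    rw [Finset.card_eq_sum_ones, Nat.cast_sum]
    apply Finset.sum_congr rfl
    intro g hg
    rw [Finset.mem_filter] at hg
    rw [hP g hg.2, sgn_zero]
    norm_num
  · rw [if_neg hP]
    push_neg at hP
    obtain ⟨g₀, hg₀M, hg₀⟩ := hP
    have hdot : (∑ i, g₀ i * h i) = 1 := zmod2_ne_zero hg₀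
    have hadd : ∀ x : ZMod 2, x + x = 0 := by decide
    apply Finset.sum_involution (fun g _ => g + g₀)
    · intro g hg
      have : (∑ i, (g + g₀) i * h i) = (∑ i, g i * h i) + (∑ i, g₀ i * h i) := by
        rw [← Finset.sum_add_distrib]
        apply Finset.sum_congr rfl
        intro i _
        simp [add_mul]
      rw [this, sgn_add, hdot]
      simp [sgn]
    · intro g hg hne
      intro hcontra
      have : g₀ = 0 := by
        have := congrArg (fun x => x - g) hcontra
        simpa using this
      rw [this] at hdot
      simp at hdot
    · intro g hg
      rw [Finset.mem_filter] at hg ⊢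
      exact ⟨Finset.mem_univ _, M.add_mem hg.2 hg₀M⟩
    · intro g hg
      funext i
      simp [add_assoc, hadd]

open scoped Classical in
lemma card_mul_card {m : ℕ} (M : Submodule (ZMod 2) (Fin m → ZMod 2)) :
    ((Finset.univ.filter (fun g : Fin m → ZMod 2 => g ∈ M)).card : ℝ) *
      ((Finset.univ.filter (fun h : Fin m → ZMod 2 => ∀ g ∈ M, ∑ i, g i * h i = 0)).card : ℝ)
      = 2 ^ m := by
  have key : ∑ g ∈ Finset.univ.filter (fun g : Fin m → ZMod 2 => g ∈ M),
      ∑ h : Fin m → ZMod 2, sgn (∑ i, g i * h i)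
      = ∑ h : Fin m → ZMod 2, ∑ g ∈ Finset.univ.filter (fun g : Fin m → ZMod 2 => g ∈ M),
        sgn (∑ i, g i * h i) := Finset.sum_comm
  -- evaluate LHS of key
  have lhs_eval : ∑ g ∈ Finset.univ.filter (fun g : Fin m → ZMod 2 => g ∈ M),
      ∑ h : Fin m → ZMod 2, sgn (∑ i, g i * h i) = 2 ^ m := by
    have inner : ∀ g : Fin m → ZMod 2,
        ∑ h : Fin m → ZMod 2, sgn (∑ i, g i * h i) = ∏ i, (1 + sgn (g i)) := by
      intro g
      have : ∀ h : Fin m → ZMod 2, sgn (∑ i, g i * h i) = ∏ i, sgn (g i * h i) := by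
        intro h; rw [sgn_sum]
      simp_rw [this]
      rw [pi_sum (fun i x => sgn (g i * x))]
      apply Finset.prod_congr rfl
      intro i _
      rw [sum_zmod2]
      simp [sgn_zero, mul_comm]
    simp_rw [inner]
    have : ∀ g : Fin m → ZMod 2, (∏ i, (1 + sgn (g i))) = if g = 0 then (2:ℝ)^m else 0 := by
      intro g
      by_cases hg : g = 0
      · subst hg; simp [sgn_zero]; norm_num
      · rw [if_neg hg]
        obtain ⟨i, hi⟩ : ∃ i, g i ≠ 0 := by
          by_contra hc; push_neg at hc; exact hg (funext hc)
        apply Finset.prod_eq_zero (Finset.mem_univ i)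
        rw [zmod2_ne_zero hi]
        simp [sgn]
    simp_rw [this]
    rw [Finset.sum_ite_eq' _ (0 : Fin m → ZMod 2)]
    rw [if_pos]
    rw [Finset.mem_filter]
    exact ⟨Finset.mem_univ _, M.zero_mem⟩
  -- evaluate RHS of key
  have rhs_eval : ∑ h : Fin m → ZMod 2, ∑ g ∈ Finset.univ.filter (fun g : Fin m → ZMod 2 => g ∈ M),
        sgn (∑ i, g i * h i)
      = ((Finset.univ.filter (fun g : Fin m → ZMod 2 => g ∈ M)).card : ℝ) *
        ((Finset.univ.filter (fun h : Fin m → ZMod 2 => ∀ g ∈ M, ∑ i, g i * h i = 0)).card : ℝ) := by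
    simp_rw [orth_sum M]
    rw [← Finset.sum_filter, Finset.sum_const, nsmul_eq_mul, mul_comm]
  rw [lhs_eval] at key
  rw [rhs_eval] at key
  linarith


open scoped Classical in
/-- **Random-bond transpose duality** (Eq. (Tdual)): the disorder-averaged random-bond
transpose partition function at inverse temperature `β` equals, up to the trivial factor
`(1+e^{−β})^{2m} / |M^⊥|`, the perpendicular-complement model at inverse temperature
`2β'` where `e^{−β'} = tanh(β/2)`. -/
theorem random_bond_transpose_duality {m : ℕ}
    (M : Submodule (ZMod 2) (Fin m → ZMod 2)) (β : ℝ) (hβ : 0 < β) :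
    ∑ f : Fin m → ZMod 2, ∑ g ∈ Finset.univ.filter (fun g => g ∈ M),
        Real.exp (-β * ((wt f : ℝ) + (wt (f + g) : ℝ)))
      = (1 / (Nat.card {h : Fin m → ZMod 2 | ∀ g ∈ M, ∑ i, g i * h i = 0} : ℝ)) *
          (1 + Real.exp (-β)) ^ (2 * m) *
          ∑ h ∈ Finset.univ.filter (fun h : Fin m → ZMod 2 => ∀ g ∈ M, ∑ i, g i * h i = 0),
            Real.tanh (β / 2) ^ (2 * wt h) := by
  have he1 : (0:ℝ) < 1 + Real.exp (-β) := by positivity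
  have hepos : (0:ℝ) < Real.exp (-β) := Real.exp_pos _
  set e := Real.exp (-β) with he
  set u := Real.tanh (β/2) with hudef
  have hu : u = (1 - e) / (1 + e) := tanh_half β
  have hne : 1 + e ≠ 0 := ne_of_gt he1
  set K : ℝ := (1+e)^2/2 with hK
  -- Step C: per-coordinate identity
  have stepC : ∀ b : ZMod 2,
      (∑ a : ZMod 2, Real.exp (-β * ((if a = 1 then (1:ℝ) else 0) + (if a + b = 1 then 1 else 0))))
        = K * (1 + sgn b * u^2) := by
    intro b
    rw [sum_zmod2]
    have hb : b = 0 ∨ b = 1 := by revert b; decide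
    have hexp2 : Real.exp (-β * ((1:ℝ) + 1)) = e * e := by
      rw [show (-β * ((1:ℝ)+1)) = -β + -β by ring, Real.exp_add]
    have hexp1 : Real.exp (-β * ((0:ℝ) + 1)) = e := by
      rw [show (-β * ((0:ℝ)+1)) = -β by ring]
    have hexp1' : Real.exp (-β * ((1:ℝ) + 0)) = e := by
      rw [show (-β * ((1:ℝ)+0)) = -β by ring]
    have hexp0 : Real.exp (-β * ((0:ℝ) + 0)) = 1 := by
      rw [show (-β * ((0:ℝ)+0)) = 0 by ring, Real.exp_zero]
    rcases hb with rfl | rfl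
    · rw [if_neg (by decide : ¬ ((0:ZMod 2) = 1)), if_neg (by decide : ¬ ((0+0:ZMod 2) = 1)),
        if_pos rfl, if_pos (by decide : ((1+0:ZMod 2) = 1)), hexp0, hexp2, sgn_zero, hu, hK]
      field_simp
      ring
    · rw [if_neg (by decide : ¬ ((0:ZMod 2) = 1)), if_pos (by decide : ((0+1:ZMod 2) = 1)),
        if_pos rfl, if_neg (by decide : ¬ ((1+1:ZMod 2) = 1)), hexp1, hexp1',
        show sgn 1 = -1 by simp [sgn], hu, hK]
      field_simp
      ring
  -- per-g identity
  have perg : ∀ g : Fin m → ZMod 2,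
      ∑ f : Fin m → ZMod 2, Real.exp (-β * ((wt f : ℝ) + (wt (f + g) : ℝ)))
        = K^m * ∑ h : Fin m → ZMod 2, u ^ (2 * wt h) * sgn (∑ i, g i * h i) := by
    intro g
    have hleft : ∑ f : Fin m → ZMod 2, Real.exp (-β * ((wt f : ℝ) + (wt (f + g) : ℝ)))
        = ∏ i, ∑ a : ZMod 2,
            Real.exp (-β * ((if a = 1 then (1:ℝ) else 0) + (if a + g i = 1 then 1 else 0))) := by
      rw [← pi_sum (fun i a =>
        Real.exp (-β * ((if a = 1 then (1:ℝ) else 0) + (if a + g i = 1 then 1 else 0))))]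
      apply Finset.sum_congr rfl
      intro f _
      rw [← Real.exp_sum]
      congr 1
      rw [wt_real, wt_real, ← Finset.mul_sum, ← Finset.sum_add_distrib]
      simp [Pi.add_apply]
    have hright : ∑ h : Fin m → ZMod 2, u ^ (2 * wt h) * sgn (∑ i, g i * h i)
        = ∏ i, (1 + sgn (g i) * u^2) := by
      have hterm : ∀ h : Fin m → ZMod 2,
          u ^ (2 * wt h) * sgn (∑ i, g i * h i)
            = ∏ i, (u ^ (2 * (if h i = 1 then 1 else 0)) * sgn (g i * h i)) := by
        intro h
        rw [sgn_sum, Finset.prod_mul_distrib]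
        congr 1
        rw [Finset.prod_pow_eq_pow_sum]
        congr 1
        rw [wt, Finset.card_filter, Finset.mul_sum]
      simp_rw [hterm]
      rw [pi_sum (fun i x => u ^ (2 * (if x = 1 then 1 else 0)) * sgn (g i * x))]
      apply Finset.prod_congr rfl
      intro i _
      rw [sum_zmod2, mul_zero, mul_one, sgn_zero,
        if_neg (by decide : ¬ ((0:ZMod 2) = 1)), if_pos rfl]
      norm_num [mul_comm]
    rw [hleft, hright]
    have hC : ∀ i : Fin m, (∑ a : ZMod 2,
        Real.exp (-β * ((if a = 1 then (1:ℝ) else 0) + (if a + g i = 1 then 1 else 0))))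
        = K * (1 + sgn (g i) * u^2) := fun i => stepC (g i)
    rw [Finset.prod_congr rfl (fun i _ => hC i), Finset.prod_mul_distrib,
      Finset.prod_const, Finset.card_univ, Fintype.card_fin]
  -- assemble
  rw [Finset.sum_comm]
  calc ∑ g ∈ Finset.univ.filter (fun g => g ∈ M), ∑ f : Fin m → ZMod 2,
          Real.exp (-β * ((wt f : ℝ) + (wt (f + g) : ℝ)))
      = ∑ g ∈ Finset.univ.filter (fun g => g ∈ M),
          K^m * ∑ h : Fin m → ZMod 2, u ^ (2 * wt h) * sgn (∑ i, g i * h i) := by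
        exact Finset.sum_congr rfl (fun g _ => perg g)
    _ = K^m * ∑ h : Fin m → ZMod 2, ∑ g ∈ Finset.univ.filter (fun g => g ∈ M),
          u ^ (2 * wt h) * sgn (∑ i, g i * h i) := by
        rw [← Finset.mul_sum, Finset.sum_comm]
    _ = K^m * ∑ h : Fin m → ZMod 2, u ^ (2 * wt h) *
          ∑ g ∈ Finset.univ.filter (fun g => g ∈ M), sgn (∑ i, g i * h i) := by
        congr 1
        exact Finset.sum_congr rfl (fun h _ => (Finset.mul_sum _ _ _).symm)
    _ = K^m * ∑ h : Fin m → ZMod 2,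
          (if (∀ g ∈ M, ∑ i, g i * h i = 0)
            then u ^ (2 * wt h) * ((Finset.univ.filter (fun g : Fin m → ZMod 2 => g ∈ M)).card : ℝ)
            else 0) := by
        congr 1
        apply Finset.sum_congr rfl
        intro h _
        rw [orth_sum M h]
        split <;> simp
    _ = K^m * ((Finset.univ.filter (fun g : Fin m → ZMod 2 => g ∈ M)).card : ℝ) *
          ∑ h ∈ Finset.univ.filter (fun h : Fin m → ZMod 2 => ∀ g ∈ M, ∑ i, g i * h i = 0),
            u ^ (2 * wt h) := by
        rw [← Finset.sum_filter, Finset.mul_sum, Finset.mul_sum]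
        apply Finset.sum_congr rfl
        intro h _
        ring
    _ = (1 / (Nat.card {h : Fin m → ZMod 2 | ∀ g ∈ M, ∑ i, g i * h i = 0} : ℝ)) *
          (1 + e) ^ (2 * m) *
          ∑ h ∈ Finset.univ.filter (fun h : Fin m → ZMod 2 => ∀ g ∈ M, ∑ i, g i * h i = 0),
            u ^ (2 * wt h) := by
        congr 1
        have hcard : (Nat.card {h : Fin m → ZMod 2 | ∀ g ∈ M, ∑ i, g i * h i = 0} : ℕ)
            = (Finset.univ.filter (fun h : Fin m → ZMod 2 => ∀ g ∈ M, ∑ i, g i * h i = 0)).card := by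
          rw [Nat.card_eq_fintype_card]
          simp [Fintype.card_subtype]
        have hPpos : 0 < (Finset.univ.filter
            (fun h : Fin m → ZMod 2 => ∀ g ∈ M, ∑ i, g i * h i = 0)).card := by
          apply Finset.card_pos.mpr
          exact ⟨0, by simp⟩
        have hPne : ((Finset.univ.filter
            (fun h : Fin m → ZMod 2 => ∀ g ∈ M, ∑ i, g i * h i = 0)).card : ℝ) ≠ 0 :=
          Nat.cast_ne_zero.mpr hPpos.ne'
        rw [hcard]
        have hMP := card_mul_card M
        have h2 : ((2:ℝ))^m ≠ 0 := by positivity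
        rw [hK, div_pow, ← pow_mul]
        field_simp
        linear_combination hMP
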